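/- Let u₀, u₁ ∈ E be orthonormal, let T > 0, let θ : ℝ → ℝ be differentiable and monotone nondecreasing on [0,T] with θ 0 = 0 and θ T ≤ π/2, and define v t := Real.cos (θ t) • u₀ + Real.sin (θ t) • u₁. Then ‖v t‖ = 1 for all t, and the Fubini–Study length equals the angle: ∫₀ᵀ √(‖v'(t)‖² − |⟨v t, v'(t)⟩|²) dt = Real.arccos ‖⟨v 0, v T⟩‖ = θ T. In other words, evolutions confined to the two-dimensional span of the initial vector and a fixed orthogonal vector, with monotonically decreasing overlap, saturate the quantum speed limit. -/

import Mathlib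

/-- Corollary to Theorem 1: an evolution confined to the two-dimensional span of the initial
vector and a fixed orthogonal vector, with monotonically increasing angle, saturates the
quantum speed limit: the Fubini–Study length equals the Liouville space angle `θ T`. -/
theorem geodesic_saturates_speed_limit
    {E : Type*} [NormedAddCommGroup E] [InnerProductSpace ℂ E] [FiniteDimensional ℂ E]
    (u₀ u₁ : E) (h₀ : ‖u₀‖ = 1) (h₁ : ‖u₁‖ = 1) (horth : (inner ℂ u₀ u₁ : ℂ) = 0)
    (T : ℝ) (hT : 0 < T) (θ : ℝ → ℝ)
    (hθdiff : DifferentiableOn ℝ θ (Set.Icc 0 T))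
    (hθmono : MonotoneOn θ (Set.Icc 0 T))
    (hθ0 : θ 0 = 0) (hθT : θ T ≤ Real.pi / 2) :
    let v : ℝ → E := fun t => Real.cos (θ t) • u₀ + Real.sin (θ t) • u₁
    (∀ t, ‖v t‖ = 1) ∧
    (∫ t in (0 : ℝ)..T,
        Real.sqrt (‖deriv v t‖ ^ 2 - ‖(inner ℂ (v t) (deriv v t) : ℂ)‖ ^ 2)) =
      Real.arccos ‖(inner ℂ (v 0) (v T) : ℂ)‖ ∧
    Real.arccos ‖(inner ℂ (v 0) (v T) : ℂ)‖ = θ T := by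
  intro v
  have h01 : (inner ℂ u₁ u₀ : ℂ) = 0 := by rw [← inner_conj_symm, horth]; simp
  have h00 : (inner ℂ u₀ u₀ : ℂ) = 1 := by
    rw [inner_self_eq_norm_sq_to_K, h₀]; norm_num
  have h11 : (inner ℂ u₁ u₁ : ℂ) = 1 := by
    rw [inner_self_eq_norm_sq_to_K, h₁]; norm_num
  have sm : ∀ (r s : ℝ) (a b : E),
      (inner ℂ (r • a) (s • b) : ℂ) = (r : ℂ) * (s : ℂ) * inner ℂ a b := by
    intro r s a b
    rw [RCLike.real_smul_eq_coe_smul (K := ℂ) r, RCLike.real_smul_eq_coe_smul (K := ℂ) s,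
      inner_smul_left, inner_smul_right]
    simp [Complex.conj_ofReal]
    ring
  -- key inner product computation
  have key : ∀ x y x' y' : ℝ,
      (inner ℂ (x • u₀ + y • u₁) (x' • u₀ + y' • u₁) : ℂ) = ((x * x' + y * y' : ℝ) : ℂ) := by
    intro x y x' y'
    rw [inner_add_left, inner_add_right, inner_add_right, sm, sm, sm, sm,
      horth, h01, h00, h11]
    push_cast
    ring
  -- norm of v
  have hnorm : ∀ t, ‖v t‖ = 1 := by
    intro t
    have h1 : (inner ℂ (v t) (v t) : ℂ) = (((1 : ℝ)) : ℂ) := by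
      rw [key]
      norm_cast
      rw [← Real.cos_sq_add_sin_sq (θ t)]; ring
    have h3 := inner_self_eq_norm_sq_to_K (𝕜 := ℂ) (v t)
    rw [h1, ← RCLike.ofReal_pow] at h3
    have h4 : (1 : ℝ) = ‖v t‖ ^ 2 := (RCLike.ofReal_inj (K := ℂ)).mp h3
    nlinarith [norm_nonneg (v t)]
  have h0T : θ 0 ≤ θ T := hθmono ⟨le_refl 0, hT.le⟩ ⟨hT.le, le_refl T⟩ hT.le
  have hθTnn : 0 ≤ θ T := hθ0 ▸ h0T
  have harccos : Real.arccos ‖(inner ℂ (v 0) (v T) : ℂ)‖ = θ T := by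
    have hv0T : (inner ℂ (v 0) (v T) : ℂ) = ((Real.cos (θ T) : ℝ) : ℂ) := by
      simp only [v, key, hθ0]
      norm_num
    rw [hv0T, Complex.norm_real, Real.norm_eq_abs,
      abs_of_nonneg (Real.cos_nonneg_of_mem_Icc ⟨by linarith [Real.pi_pos], hθT⟩)]
    exact Real.arccos_cos hθTnn (by linarith [Real.pi_pos])
  refine ⟨hnorm, ?_, harccos⟩
  rw [harccos]
  -- differentiability of θ at interior points
  have hdiffat : ∀ t ∈ Set.Ioo (0:ℝ) T, DifferentiableAt ℝ θ t := by
    intro t ht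
    exact (hθdiff t ⟨ht.1.le, ht.2.le⟩).differentiableAt (Icc_mem_nhds ht.1 ht.2)
  have hvderiv : ∀ t ∈ Set.Ioo (0:ℝ) T,
      HasDerivAt v ((-Real.sin (θ t) * deriv θ t) • u₀
        + (Real.cos (θ t) * deriv θ t) • u₁) t := by
    intro t ht
    have hθt : HasDerivAt θ (deriv θ t) t := (hdiffat t ht).hasDerivAt
    exact ((hθt.cos).smul_const u₀).add ((hθt.sin).smul_const u₁)
  -- deriv θ nonneg on interior
  have hθ'nn : ∀ t ∈ Set.Ioo (0:ℝ) T, 0 ≤ deriv θ t := by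
    intro t ht
    have hθt : HasDerivAt θ (deriv θ t) t := (hdiffat t ht).hasDerivAt
    have hslope : Filter.Tendsto (slope θ t) (nhdsWithin t (Set.Ioi t)) (nhds (deriv θ t)) :=
      (hasDerivAt_iff_tendsto_slope.mp hθt).mono_left
        (nhdsWithin_mono t fun y hy => ne_of_gt hy)
    refine ge_of_tendsto hslope ?_
    filter_upwards [Ioo_mem_nhdsGT_of_mem ⟨le_refl t, ht.2⟩] with y hy
    have := hθmono ⟨ht.1.le, ht.2.le⟩ ⟨ht.1.le.trans hy.1.le, hy.2.le⟩ hy.1.le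
    rw [slope_def_field]
    exact div_nonneg (by linarith) (by linarith [hy.1])
  -- integrand equals deriv θ on the interior
  have hcong : ∀ t ∈ Set.Ioo (0:ℝ) T,
      Real.sqrt (‖deriv v t‖ ^ 2 - ‖(inner ℂ (v t) (deriv v t) : ℂ)‖ ^ 2) = deriv θ t := by
    intro t ht
    rw [(hvderiv t ht).deriv]
    have hip : (inner ℂ (v t)
        ((-Real.sin (θ t) * deriv θ t) • u₀ + (Real.cos (θ t) * deriv θ t) • u₁) : ℂ)
        = ((0 : ℝ) : ℂ) := by
      rw [key]; norm_cast; ring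
    have hnn : ‖((-Real.sin (θ t) * deriv θ t) • u₀
        + (Real.cos (θ t) * deriv θ t) • u₁)‖ ^ 2 = (deriv θ t) ^ 2 := by
      have h2 : (inner ℂ ((-Real.sin (θ t) * deriv θ t) • u₀ + (Real.cos (θ t) * deriv θ t) • u₁)
          ((-Real.sin (θ t) * deriv θ t) • u₀ + (Real.cos (θ t) * deriv θ t) • u₁) : ℂ)
          = (((deriv θ t) ^ 2 : ℝ) : ℂ) := by
        rw [key]
        norm_cast
        have := Real.sin_sq_add_cos_sq (θ t)
        nlinarith
      have h3 := inner_self_eq_norm_sq_to_K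
        (𝕜 := ℂ) ((-Real.sin (θ t) * deriv θ t) • u₀ + (Real.cos (θ t) * deriv θ t) • u₁)
      rw [h2, ← RCLike.ofReal_pow] at h3
      exact ((RCLike.ofReal_inj (K := ℂ)).mp h3).symm
    rw [hip, hnn]
    simp only [Complex.ofReal_zero, norm_zero]
    rw [show ((0:ℝ)) ^ 2 = 0 by norm_num, sub_zero, Real.sqrt_sq (hθ'nn t ht)]
  have hcont : ContinuousOn θ (Set.Icc 0 T) := hθdiff.continuousOn
  have hint : IntervalIntegrable (deriv θ) MeasureTheory.volume 0 T := by
    apply intervalIntegral.intervalIntegrable_deriv_of_nonneg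
    · rwa [Set.uIcc_of_le hT.le]
    · rw [min_eq_left hT.le, max_eq_right hT.le]
      intro x hx; exact ((hdiffat x hx).hasDerivAt)
    · rw [min_eq_left hT.le, max_eq_right hT.le]
      exact hθ'nn
  have heq : (∫ t in (0:ℝ)..T,
      Real.sqrt (‖deriv v t‖ ^ 2 - ‖(inner ℂ (v t) (deriv v t) : ℂ)‖ ^ 2))
      = ∫ t in (0:ℝ)..T, deriv θ t := by
    apply intervalIntegral.integral_congr_ae
    have hTae : ∀ᵐ x : ℝ ∂MeasureTheory.volume, x ≠ T := by
      rw [MeasureTheory.ae_iff]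
      simp only [ne_eq, not_not, Set.setOf_eq_eq_singleton]
      exact MeasureTheory.measure_singleton T
    filter_upwards [hTae] with x hx hmem
    rw [Set.uIoc_of_le hT.le] at hmem
    exact hcong x ⟨hmem.1, lt_of_le_of_ne hmem.2 hx⟩
  rw [heq,
    intervalIntegral.integral_eq_sub_of_hasDerivAt_of_le hT.le hcont
      (fun x hx => (hdiffat x hx).hasDerivAt) hint,
    hθ0, sub_zero]
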